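/- Fix 0 < q < 1 and let C_1 = C_1(q) be a positive integer with q^{C_1}/(1-q) < 1/10. For x ≥ 0 and t ≥ 0 let 𝓛_x(t) = #{1 ≤ n ≤ t : M_n ≤ x} be the time the chain spends at or below x up to time t. Then there exist constants C_2 = C_2(q) > 0, A = A(q) > 0 and c = c(q) > 0 such that for every starting state r ≤ C_1 and every real s ≥ 0, P_r(𝓛_{C_1}(s/2) < s/C_2) ≤ A e^{-cs}. -/

import Mathlib

open MeasureTheory
open scoped ENNReal

noncomputable section

/-- The chain `M_0 = m0`, `M_n = max (M_{n-1}, Z_n) - 1`. -/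
def chainM (m0 : ℕ) (z : ℕ → ℕ) : ℕ → ℕ
  | 0 => m0
  | n + 1 => max (chainM m0 z n) (z (n + 1)) - 1

/-- `𝓛_x(t) = #{1 ≤ n ≤ t : M_n ≤ x}`, the time the trajectory `M` spends at or below
`x` up to (real) time `t`. -/
noncomputable def occLow (M : ℕ → ℕ) (x : ℕ) (t : ℝ) : ℕ :=
  ((Finset.Icc 1 ⌊t⌋₊).filter (fun n => M n ≤ x)).card

lemma chain_high (C₁ r : ℕ) (hr : r ≤ C₁) (z : ℕ → ℕ) :
    ∀ n, C₁ < chainM r z n →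
      ∃ k, 1 ≤ k ∧ k ≤ n ∧ n + (chainM r z n - C₁) ≤ k + (z k - C₁) := by
  intro n
  induction n with
  | zero => intro h; simp only [chainM] at h; omega
  | succ n ih =>
    intro h
    have hdef : chainM r z (n + 1) = max (chainM r z n) (z (n + 1)) - 1 := rfl
    by_cases hz : chainM r z n ≤ z (n + 1)
    · have h1 : chainM r z (n + 1) = z (n + 1) - 1 := by rw [hdef, max_eq_right hz]
      exact ⟨n + 1, by omega, le_rfl, by omega⟩
    · push_neg at hz
      have h1 : chainM r z (n + 1) = chainM r z n - 1 := by rw [hdef, max_eq_left hz.le]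
      obtain ⟨k, hk1, hk2, hk3⟩ := ih (by omega)
      exact ⟨k, hk1, by omega, by omega⟩

lemma card_low (C₁ r : ℕ) (hr : r ≤ C₁) (z : ℕ → ℕ) (N : ℕ) :
    N ≤ ((Finset.Icc 1 N).filter (fun n => chainM r z n ≤ C₁)).card
        + ∑ k ∈ Finset.Icc 1 N, (z k - C₁) := by
  have hsplit := Finset.card_filter_add_card_filter_not
    (s := Finset.Icc 1 N) (p := fun n => chainM r z n ≤ C₁)
  have hcard : (Finset.Icc 1 N).card = N := by rw [Nat.card_Icc]; omega
  have hsub : ((Finset.Icc 1 N).filter (fun n => ¬ chainM r z n ≤ C₁)).card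
      ≤ ∑ k ∈ Finset.Icc 1 N, (z k - C₁) := by
    have hss : (Finset.Icc 1 N).filter (fun n => ¬ chainM r z n ≤ C₁)
        ⊆ (Finset.Icc 1 N).biUnion (fun k => Finset.Icc k (k + (z k - C₁) - 1)) := by
      intro n hn
      simp only [Finset.mem_filter, Finset.mem_Icc, not_le] at hn
      obtain ⟨⟨hn1, hn2⟩, hn3⟩ := hn
      obtain ⟨k, hk1, hk2, hk3⟩ := chain_high C₁ r hr z n hn3
      exact Finset.mem_biUnion.2 ⟨k, Finset.mem_Icc.2 ⟨hk1, hk2.trans hn2⟩,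
        Finset.mem_Icc.2 ⟨hk2, by omega⟩⟩
    refine (Finset.card_le_card hss).trans (Finset.card_biUnion_le.trans ?_)
    refine Finset.sum_le_sum fun k hk => ?_
    have hk1 : 1 ≤ k := (Finset.mem_Icc.1 hk).1
    rw [Nat.card_Icc]; omega
  omega

lemma lintegral_prod_indep {Ω : Type*} [MeasurableSpace Ω] {P : Measure Ω}
    [IsProbabilityMeasure P] (G : ℕ → Ω → ℝ≥0∞) (hG : ∀ i, Measurable (G i))
    (h : ProbabilityTheory.iIndepFun G P) (s : Finset ℕ) :
    ∫⁻ ω, ∏ i ∈ s, G i ω ∂P = ∏ i ∈ s, ∫⁻ ω, G i ω ∂P := by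
  induction s using Finset.cons_induction with
  | empty => simp
  | cons i s hi ih =>
    simp only [Finset.prod_cons]
    have hauxm : Measurable (fun ω => ∏ j ∈ s, G j ω) :=
      Finset.measurable_prod _ fun j _ => hG j
    have hindep : ProbabilityTheory.IndepFun (G i) (fun ω => ∏ j ∈ s, G j ω) P := by
      have := (h.indepFun_finsetProd_of_notMem hG hi).symm
      convert this using 1
      ext ω
      simp [Finset.prod_apply]
    rw [ProbabilityTheory.lintegral_mul_eq_lintegral_mul_lintegral_of_indepFun''
      (hG i).aemeasurable hauxm.aemeasurable hindep, ih]

lemma mgf_single {Ω : Type*} [MeasurableSpace Ω] (P : Measure Ω) [IsProbabilityMeasure P]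
    (q : ℝ) (hq0 : 0 < q) (hq1 : q < 1) (Z : Ω → ℕ) (hZ : Measurable Z)
    (hpos : ∀ ω, 1 ≤ Z ω)
    (hgeom : ∀ k, 1 ≤ k → P {ω | Z ω = k} = ENNReal.ofReal ((1 - q) * q ^ (k - 1)))
    (C₁ : ℕ) (hC₁pos : 1 ≤ C₁) :
    ∫⁻ ω, (ENNReal.ofReal ((1 + q) / (2 * q))) ^ (Z ω - C₁) ∂P
      = ENNReal.ofReal (1 + q ^ (C₁ - 1)) := by
  set x : ℝ := (1 + q) / (2 * q) with hxdef
  have hx0 : 0 < x := by positivity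
  have hqx : q * x = (1 + q) / 2 := by rw [hxdef, mul_div_assoc', div_eq_div_iff (by positivity) (by norm_num)]; ring
  have hqx1 : q * x < 1 := by rw [hqx]; linarith
  have hqx0 : 0 ≤ q * x := by positivity
  -- rewrite as integral over ℕ
  have hmap : ∫⁻ ω, (ENNReal.ofReal x) ^ (Z ω - C₁) ∂P
      = ∫⁻ n, (ENNReal.ofReal x) ^ (n - C₁) ∂(P.map Z) :=
    (lintegral_map (f := fun n : ℕ => (ENNReal.ofReal x) ^ (n - C₁)) measurable_from_nat hZ).symm
  rw [hmap, lintegral_countable']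
  have hmass : ∀ n : ℕ, (P.map Z) {n}
      = if n = 0 then 0 else ENNReal.ofReal ((1 - q) * q ^ (n - 1)) := by
    intro n
    rw [Measure.map_apply hZ (measurableSet_singleton n)]
    have hpre : Z ⁻¹' {n} = {ω | Z ω = n} := by ext ω; simp
    rw [hpre]
    rcases Nat.eq_zero_or_pos n with h0 | h1
    · subst h0
      have : {ω | Z ω = 0} = (∅ : Set Ω) := by
        ext ω; simp only [Set.mem_setOf_eq, Set.mem_empty_iff_false, iff_false]
        have := hpos ω; omega
      simp [this]
    · rw [hgeom n h1, if_neg (by omega)]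
  have key : ∑' n : ℕ, (ENNReal.ofReal x) ^ (n - C₁) * (P.map Z) {n}
      = ENNReal.ofReal (1 - q ^ C₁) + ENNReal.ofReal ((1 + q) * q ^ (C₁ - 1)) := by
    set a : ℕ → ℝ≥0∞ := fun n => (ENNReal.ofReal x) ^ (n - C₁) * (P.map Z) {n} with hadef
    have hsum := Summable.sum_add_tsum_nat_add' (f := a) (k := C₁ + 1) ENNReal.summable
    rw [← hsum]
    congr 1
    · -- head sum
      have : ∀ n ∈ Finset.range (C₁ + 1),
          a n = if n = 0 then 0 else ENNReal.ofReal ((1 - q) * q ^ (n - 1)) := by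
        intro n hn
        have hn' : n ≤ C₁ := by simpa using Nat.lt_succ_iff.mp (Finset.mem_range.mp hn)
        rw [hadef]
        simp only
        rw [hmass n, Nat.sub_eq_zero_of_le hn', pow_zero, one_mul]
      rw [Finset.sum_congr rfl this]
      rw [Finset.sum_range_succ']
      simp only [if_neg (Nat.succ_ne_zero _), if_pos rfl, add_zero, Nat.add_sub_cancel]
      rw [← ENNReal.ofReal_sum_of_nonneg
        (fun i _ => mul_nonneg (by linarith) (pow_nonneg hq0.le _))]
      have hgeo : ∑ i ∈ Finset.range C₁, q ^ i = (q ^ C₁ - 1) / (q - 1) :=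
        geom_sum_eq (by linarith) C₁
      have h3 : q - 1 ≠ 0 := by linarith
      have hhead : ∑ i ∈ Finset.range C₁, (1 - q) * q ^ i = 1 - q ^ C₁ := by
        rw [← Finset.mul_sum, hgeo]
        field_simp
        ring
      rw [hhead]
      simp
    · -- tail sum
      have htail : ∀ j : ℕ, a (j + (C₁ + 1))
          = ENNReal.ofReal ((x * (1 - q) * q ^ C₁) * (q * x) ^ j) := by
        intro j
        rw [hadef]
        simp only
        rw [hmass (j + (C₁ + 1)), if_neg (by omega)]
        have h1 : j + (C₁ + 1) - C₁ = j + 1 := by omega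
        have h2 : j + (C₁ + 1) - 1 = j + C₁ := by omega
        rw [h1, h2, ← ENNReal.ofReal_pow hx0.le, ← ENNReal.ofReal_mul (by positivity)]
        congr 1
        rw [pow_add, mul_pow]
        ring
      rw [tsum_congr htail]
      rw [← ENNReal.ofReal_tsum_of_nonneg
        (fun j => mul_nonneg (mul_nonneg (mul_nonneg hx0.le (by linarith))
          (pow_nonneg hq0.le _)) (pow_nonneg hqx0 _))
        ((summable_geometric_of_lt_one hqx0 hqx1).mul_left _)]
      have h1q2 : (1 : ℝ) - (1 + q) / 2 = (1 - q) / 2 := by ring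
      have hC : q ^ C₁ = q * q ^ (C₁ - 1) := by
        rw [← pow_succ']
        congr 1
        omega
      have h1 : (1 : ℝ) - q ≠ 0 := by linarith
      have h2 : q ≠ 0 := ne_of_gt hq0
      have htsum : ∑' j : ℕ, x * (1 - q) * q ^ C₁ * (q * x) ^ j
          = (1 + q) * q ^ (C₁ - 1) := by
        rw [tsum_mul_left, tsum_geometric_of_lt_one hqx0 hqx1, hqx, h1q2, hxdef, hC]
        field_simp
      rw [htsum]
  rw [key, ← ENNReal.ofReal_add (by nlinarith [pow_lt_one₀ hq0.le hq1 (by omega : C₁ ≠ 0)])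
    (by positivity)]
  congr 1
  have hC : q ^ C₁ = q * q ^ (C₁ - 1) := by
    rw [← pow_succ']
    congr 1
    omega
  rw [hC]
  ring

/-- **The chain spends a positive fraction of time at low levels.** Fix `0 < q < 1` and
a positive integer `C₁` with `q^{C₁}/(1-q) < 1/10`. There are constants `C₂ > 0`,
`A > 0` and `c > 0` such that for every starting state `r ≤ C₁` and every real `s ≥ 0`,
`P_r(𝓛_{C₁}(s/2) < s/C₂) ≤ A e^{-c s}`. -/
theorem occupation_time_lower_tail
    {Ω : Type*} [MeasurableSpace Ω] (P : Measure Ω) [IsProbabilityMeasure P]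
    (q : ℝ) (hq0 : 0 < q) (hq1 : q < 1)
    (Z : ℕ → Ω → ℕ)
    (hmeas : ∀ i, Measurable (Z i))
    (hindep : ProbabilityTheory.iIndepFun Z P)
    (hpos : ∀ i ω, 1 ≤ Z i ω)
    (hgeom : ∀ i k, 1 ≤ k →
      P {ω | Z i ω = k} = ENNReal.ofReal ((1 - q) * q ^ (k - 1)))
    (C₁ : ℕ) (hC₁pos : 1 ≤ C₁) (hC₁ : q ^ C₁ / (1 - q) < 1 / 10) :
    ∃ C₂ > (0 : ℝ), ∃ A > (0 : ℝ), ∃ c > (0 : ℝ),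
      ∀ r : ℕ, r ≤ C₁ → ∀ s : ℝ, 0 ≤ s →
        P {ω | ((occLow (chainM r (fun n => Z n ω)) C₁ (s / 2) : ℝ)) < s / C₂}
          ≤ ENNReal.ofReal (A * Real.exp (-c * s)) := by
  have h1q : 0 < 1 - q := by linarith
  set x : ℝ := (1 + q) / (2 * q) with hxdef
  have hx1 : 1 < x := by
    rw [hxdef, lt_div_iff₀ (by positivity)]
    linarith
  have hx0 : 0 < x := by linarith
  set m : ℝ := 1 + q ^ (C₁ - 1) with hmdef
  have hm1 : (1 : ℝ) ≤ m := le_add_of_nonneg_right (pow_nonneg hq0.le _)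
  have hm0 : 0 < m := by linarith
  have hmx : m ^ 2 < x := by
    rw [hmdef, hxdef]
    set b := q ^ (C₁ - 1) with hb
    have hb0 : 0 ≤ b := pow_nonneg hq0.le _
    have hb1 : b ≤ 1 := pow_le_one₀ hq0.le hq1.le
    have hqb : q * b = q ^ C₁ := by
      rw [hb, ← pow_succ']
      congr 1
      omega
    have hqC : q ^ C₁ < (1 - q) / 10 := by
      rw [div_lt_div_iff₀ (by linarith) (by norm_num)] at hC₁
      linarith
    rw [lt_div_iff₀ (by positivity)]
    nlinarith [mul_nonneg hq0.le (mul_nonneg hb0 (sub_nonneg.2 hb1))]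
  set ρ : ℝ := m ^ 2 / x with hρdef
  have hρ0 : 0 < ρ := by positivity
  have hρ1 : ρ < 1 := (div_lt_one hx0).2 hmx
  have hlog : Real.log ρ < 0 := Real.log_neg hρ0 hρ1
  set c : ℝ := -Real.log ρ / 4 with hcdef
  have hc : 0 < c := by rw [hcdef]; linarith
  set A : ℝ := 1 + Real.exp (8 * c) with hAdef
  have hA0 : 0 < A := by positivity
  clear_value A c ρ m x
  refine ⟨8, by norm_num, A, hA0, c, hc, ?_⟩
  intro r hr s hs
  by_cases hs8 : s ≤ 8
  · -- small s : trivial bound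
    refine le_trans prob_le_one ?_
    rw [show (1 : ℝ≥0∞) = ENNReal.ofReal 1 by simp]
    apply ENNReal.ofReal_le_ofReal
    have he : Real.exp (8 * c) * Real.exp (-c * s) = Real.exp (8 * c - c * s) := by
      rw [← Real.exp_add]
      ring_nf
    have h0 : (1 : ℝ) ≤ Real.exp (8 * c - c * s) := Real.one_le_exp (by nlinarith)
    have hep := Real.exp_pos (-c * s)
    rw [hAdef]
    nlinarith
  · push_neg at hs8
    set N : ℕ := ⌊s / 2⌋₊ with hNdef
    have hN1 : (N : ℝ) ≤ s / 2 := Nat.floor_le (by linarith)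
    have hN2 : s / 2 - 1 < (N : ℝ) := by
      have := Nat.lt_floor_add_one (s / 2)
      push_cast
      linarith
    set T : ℕ := N / 2 + 1 with hTdef
    have hu1 : (N : ℝ) ≤ 2 * ((N / 2 : ℕ) : ℝ) + 1 := by
      exact_mod_cast (show (N : ℕ) ≤ 2 * (N / 2) + 1 by omega)
    have hu2 : 2 * ((N / 2 : ℕ) : ℝ) ≤ (N : ℝ) := by
      exact_mod_cast (show 2 * (N / 2) ≤ (N : ℕ) by omega)
    have hTr : (T : ℝ) = ((N / 2 : ℕ) : ℝ) + 1 := by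
      rw [hTdef]; push_cast; ring
    have hT4 : s / 4 ≤ (T : ℝ) := by rw [hTr]; linarith
    -- the ℝ≥0∞ random variables
    set xE : ℝ≥0∞ := ENNReal.ofReal x with hxEdef
    have hxE1 : (1 : ℝ≥0∞) ≤ xE := by
      rw [hxEdef, show (1 : ℝ≥0∞) = ENNReal.ofReal 1 by simp]
      exact ENNReal.ofReal_le_ofReal hx1.le
    set G : ℕ → Ω → ℝ≥0∞ := fun k ω => xE ^ (Z k ω - C₁) with hGdef
    have hGm : ∀ k, Measurable (G k) := fun k =>
      (measurable_from_nat (f := fun n : ℕ => xE ^ (n - C₁))).comp (hmeas k)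
    have hGindep : ProbabilityTheory.iIndepFun G P :=
      hindep.comp (fun _ => fun n : ℕ => xE ^ (n - C₁)) (fun _ => measurable_from_nat)
    set F : Ω → ℝ≥0∞ := fun ω => ∏ k ∈ Finset.Icc 1 N, G k ω with hFdef
    have hFm : Measurable F := Finset.measurable_prod _ fun k _ => hGm k
    -- event inclusion
    have hincl : {ω | ((occLow (chainM r (fun n => Z n ω)) C₁ (s / 2) : ℝ)) < s / 8}
        ⊆ {ω | xE ^ T ≤ F ω} := by
      intro ω hω
      simp only [Set.mem_setOf_eq] at hω ⊢
      set S : ℕ := ∑ k ∈ Finset.Icc 1 N, (Z k ω - C₁) with hSdef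
      have hcl := card_low C₁ r hr (fun n => Z n ω) N
      have hocc : occLow (chainM r (fun n => Z n ω)) C₁ (s / 2)
          = ((Finset.Icc 1 N).filter (fun n => chainM r (fun n => Z n ω) n ≤ C₁)).card := rfl
      rw [hocc] at hω
      have hclR : (N : ℝ) ≤
          (((Finset.Icc 1 N).filter (fun n => chainM r (fun n => Z n ω) n ≤ C₁)).card : ℝ)
            + (S : ℝ) := by
        exact_mod_cast hcl
      have hSR : (T : ℝ) - 1 < (S : ℝ) := by
        rw [hTr]
        have : ((N / 2 : ℕ) : ℝ) ≤ (N : ℝ) - s / 8 := by linarith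
        linarith
      have hTS : T ≤ S := by
        have : (T : ℝ) < (S : ℝ) + 1 := by linarith
        exact_mod_cast Nat.lt_succ_iff.mp (by exact_mod_cast this)
      calc xE ^ T ≤ xE ^ S := pow_le_pow_right₀ hxE1 hTS
        _ = F ω := by
          rw [hFdef, hSdef, hGdef]
          exact (Finset.prod_pow_eq_pow_sum _ _ _).symm
    refine le_trans (measure_mono hincl) ?_
    -- Markov / Chernoff
    have hmarkov := mul_meas_ge_le_lintegral₀ (μ := P) hFm.aemeasurable (xE ^ T)
    have hF_int : ∫⁻ ω, F ω ∂P = ENNReal.ofReal m ^ N := by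
      rw [hFdef]
      rw [lintegral_prod_indep G hGm hGindep (Finset.Icc 1 N)]
      have hone : ∀ k ∈ Finset.Icc 1 N, ∫⁻ ω, G k ω ∂P = ENNReal.ofReal m := by
        intro k _
        rw [hGdef]
        simp only
        rw [hxEdef, hxdef, hmdef]
        exact mgf_single P q hq0 hq1 (Z k) (hmeas k) (hpos k) (hgeom k) C₁ hC₁pos
      rw [Finset.prod_congr rfl hone, Finset.prod_const, Nat.card_Icc]
      norm_num
    have hxT0 : xE ^ T ≠ 0 := pow_ne_zero _ (by simp [hxEdef]; linarith)
    have hxTtop : xE ^ T ≠ ∞ := ENNReal.pow_ne_top ENNReal.ofReal_ne_top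
    have hdiv : P {ω | xE ^ T ≤ F ω} ≤ ENNReal.ofReal m ^ N / xE ^ T := by
      rw [ENNReal.le_div_iff_mul_le (Or.inl hxT0) (Or.inl hxTtop), mul_comm]
      rw [← hF_int]
      exact hmarkov
    refine hdiv.trans ?_
    have heq : ENNReal.ofReal m ^ N / xE ^ T = ENNReal.ofReal (m ^ N / x ^ T) := by
      rw [hxEdef, ← ENNReal.ofReal_pow hm0.le, ← ENNReal.ofReal_pow hx0.le,
        ENNReal.ofReal_div_of_pos (pow_pos hx0 T)]
    rw [heq]
    apply ENNReal.ofReal_le_ofReal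
    -- real estimates
    have hstep1 : m ^ N / x ^ T ≤ ρ ^ T := by
      have h3 : m ^ N ≤ (m ^ 2) ^ T := by
        rw [← pow_mul]
        exact pow_le_pow_right₀ hm1 (by omega)
      have h5 : (m ^ 2 / x) ^ T = (m ^ 2) ^ T / x ^ T := div_pow _ _ _
      rw [hρdef, h5]
      exact (div_le_div_iff_of_pos_right (pow_pos hx0 T)).mpr h3
    have hstep2 : ρ ^ T ≤ Real.exp (-c * s) := by
      have hexp : ρ ^ T = Real.exp ((T : ℝ) * Real.log ρ) := by
        rw [Real.exp_nat_mul, Real.exp_log hρ0]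
      rw [hexp]
      apply Real.exp_le_exp.2
      have : -c * s = Real.log ρ * (s / 4) := by rw [hcdef]; ring
      rw [this]
      calc (T : ℝ) * Real.log ρ ≤ (s / 4) * Real.log ρ :=
            mul_le_mul_of_nonpos_right hT4 hlog.le
        _ = Real.log ρ * (s / 4) := by ring
    have hA1 : Real.exp (-c * s) ≤ A * Real.exp (-c * s) := by
      have h1A : (1 : ℝ) ≤ A := by
        rw [hAdef]
        linarith [Real.exp_pos (8 * c)]
      exact le_mul_of_one_le_left (Real.exp_pos _).le h1A
    exact hstep1.trans (hstep2.trans hA1)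

end
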